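/- Fix λ > 0, κ := λ·ρ(1−ρ) with ρ ∈ (0,1), and t₀ > 0, ξ₀ ∈ ℝ. Then the infimum over piecewise C¹ paths w : [0,t₀] → ℝ with w(t₀) = ξ₀ of ∫₀^{t₀} λ·φ(w'(s)/λ) ds + ρ·w(0) equals κ·t₀ + ρ·ξ₀, where φ is as in the Hopf–Lax kernel. -/

import Mathlib

/-- The Hopf–Lax kernel `φ`. -/
noncomputable def hlKernel (ξ : ℝ) : ℝ :=
  if ξ ≤ -1 then 0 else if ξ < 1 then (ξ + 1) ^ 2 / 4 else ξ

/-- A path is piecewise `C¹` on `[a,b]`: it is continuous, and `C¹` on each piece of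
some finite partition of `[a,b]`. -/
def PiecewiseC1On (w : ℝ → ℝ) (a b : ℝ) : Prop :=
  ContinuousOn w (Set.Icc a b) ∧
  ∃ (k : ℕ) (s : Fin (k + 1) → ℝ), StrictMono s ∧ s 0 = a ∧ s (Fin.last k) = b ∧
    ∀ i : Fin k, ContDiffOn ℝ 1 w (Set.Icc (s i.castSucc) (s i.succ))

open Set MeasureTheory intervalIntegral

lemma hlKernel_eq (ξ : ℝ) :
    hlKernel ξ = (max 0 (min (ξ + 1) 2)) ^ 2 / 4 + max (ξ - 1) 0 := by
  unfold hlKernel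
  split_ifs with h1 h2
  · rw [max_eq_left (by linarith [min_le_left (ξ+1) 2] : min (ξ+1) 2 ≤ 0),
      max_eq_right (by linarith : ξ - 1 ≤ 0)]
    norm_num
  · rw [min_eq_left (by linarith), max_eq_right (by linarith),
      max_eq_right (by linarith : ξ - 1 ≤ 0)]
    ring
  · rw [min_eq_right (by linarith), max_eq_right (by norm_num),
      max_eq_left (by linarith : (0:ℝ) ≤ ξ - 1)]
    push_neg at h1 h2
    ring_nf
lemma hlKernel_continuous : Continuous hlKernel := by
  simp only [funext hlKernel_eq]
  fun_prop

/-- tangent-line lower bound -/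
lemma hlKernel_lb (ρ ξ : ℝ) (h0 : 0 < ρ) (h1 : ρ < 1) :
    ρ * ξ + ρ * (1 - ρ) ≤ hlKernel ξ := by
  unfold hlKernel
  split_ifs with ha hb
  · nlinarith
  · nlinarith [sq_nonneg ((ξ + 1)/2 - ρ)]
  · push_neg at ha hb; nlinarith

section Piece
variable {w : ℝ → ℝ} {a b : ℝ}

lemma deriv_ae_eq (hab : a < b) (hw : ContDiffOn ℝ 1 w (Icc a b)) :
    deriv w =ᵐ[volume.restrict (Ioc a b)] derivWithin w (Icc a b) := by
  refine ae_restrict_of_ae_eq_of_ae_restrict Ioo_ae_eq_Ioc ?_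
  refine (ae_restrict_iff' measurableSet_Ioo).2 (Filter.Eventually.of_forall fun x hx => ?_)
  exact (derivWithin_of_mem_nhds (Icc_mem_nhds hx.1 hx.2)).symm

lemma comp_intervalIntegrable (hab : a < b) (hw : ContDiffOn ℝ 1 w (Icc a b))
    (g : ℝ → ℝ) (hg : Continuous g) :
    IntervalIntegrable (fun s => g (deriv w s)) volume a b := by
  rw [intervalIntegrable_iff_integrableOn_Ioc_of_le hab.le]
  have hc : ContinuousOn (fun s => g (derivWithin w (Icc a b) s)) (Icc a b) :=
    hg.comp_continuousOn (hw.continuousOn_derivWithin (uniqueDiffOn_Icc hab) le_rfl)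
  exact ((hc.integrableOn_Icc).mono_set Ioc_subset_Icc_self).congr
    (((deriv_ae_eq hab hw).fun_comp g).symm)

lemma deriv_intervalIntegrable (hab : a < b) (hw : ContDiffOn ℝ 1 w (Icc a b)) :
    IntervalIntegrable (deriv w) volume a b :=
  comp_intervalIntegrable hab hw id continuous_id

lemma integral_deriv_piece (hab : a < b) (hw : ContDiffOn ℝ 1 w (Icc a b)) :
    ∫ s in a..b, deriv w s = w b - w a := by
  refine integral_eq_sub_of_hasDeriv_right_of_le hab.le (hw.continuousOn) (fun x hx => ?_)
    (deriv_intervalIntegrable hab hw)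
  have hd : DifferentiableAt ℝ w x :=
    ((hw.differentiableOn one_ne_zero) x (Ioo_subset_Icc_self hx)).differentiableAt
      (Icc_mem_nhds hx.1 hx.2)
  exact hd.hasDerivAt.hasDerivWithinAt

lemma piece_lower (lam ρ : ℝ) (hlam : 0 < lam) (h0 : 0 < ρ) (h1 : ρ < 1)
    (hab : a < b) (hw : ContDiffOn ℝ 1 w (Icc a b)) :
    ρ * (w b - w a) + lam * ρ * (1 - ρ) * (b - a) ≤
      ∫ s in a..b, lam * hlKernel (deriv w s / lam) := by
  have key : ∀ x : ℝ, ρ * x + lam * ρ * (1 - ρ) ≤ lam * hlKernel (x / lam) := by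
    intro x
    have := hlKernel_lb ρ (x / lam) h0 h1
    have h2 : lam * (ρ * (x / lam) + ρ * (1 - ρ)) ≤ lam * hlKernel (x / lam) :=
      mul_le_mul_of_nonneg_left this hlam.le
    calc ρ * x + lam * ρ * (1 - ρ) = lam * (ρ * (x / lam) + ρ * (1 - ρ)) := by
          field_simp
      _ ≤ _ := h2
  have hInt1 : IntervalIntegrable (fun s => ρ * deriv w s + lam * ρ * (1 - ρ)) volume a b :=
    comp_intervalIntegrable hab hw (fun x => ρ * x + lam * ρ * (1 - ρ)) (by fun_prop)
  have hInt2 : IntervalIntegrable (fun s => lam * hlKernel (deriv w s / lam)) volume a b :=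
    comp_intervalIntegrable hab hw (fun x => lam * hlKernel (x / lam))
      (by exact continuous_const.mul (hlKernel_continuous.comp (by fun_prop)))
  have := integral_mono_on hab.le hInt1 hInt2 (fun x _ => key (deriv w x))
  calc ρ * (w b - w a) + lam * ρ * (1 - ρ) * (b - a)
      = ∫ s in a..b, (ρ * deriv w s + lam * ρ * (1 - ρ)) := by
        rw [integral_add ((deriv_intervalIntegrable hab hw).const_mul ρ) intervalIntegrable_const,
          intervalIntegral.integral_const_mul, integral_deriv_piece hab hw, intervalIntegral.integral_const]
        simp [smul_eq_mul]; ring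
    _ ≤ _ := this

end Piece

/-- With constant speed `λ` and linear initial data of slope `ρ`, the Hopf–Lax
variational problem has value `κ t₀ + ρ ξ₀`, where `κ = λ ρ (1−ρ)`. -/
theorem stmt9 (lam ρ t₀ ξ₀ : ℝ) (hlam : 0 < lam) (hρ : ρ ∈ Set.Ioo (0:ℝ) 1)
    (ht₀ : 0 < t₀) :
    IsGLB {y : ℝ | ∃ w : ℝ → ℝ, PiecewiseC1On w 0 t₀ ∧ w t₀ = ξ₀ ∧
        y = (∫ s in (0:ℝ)..t₀, lam * hlKernel (deriv w s / lam)) + ρ * w 0}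
      (lam * ρ * (1 - ρ) * t₀ + ρ * ξ₀) := by
  obtain ⟨h0, h1⟩ := hρ
  set κ := lam * ρ * (1 - ρ) with hκ
  -- the optimal path
  have hmem : lam * ρ * (1 - ρ) * t₀ + ρ * ξ₀ ∈
      {y : ℝ | ∃ w : ℝ → ℝ, PiecewiseC1On w 0 t₀ ∧ w t₀ = ξ₀ ∧
        y = (∫ s in (0:ℝ)..t₀, lam * hlKernel (deriv w s / lam)) + ρ * w 0} := by
    set m := (2 * ρ - 1) * lam with hm
    refine ⟨fun t => ξ₀ + m * (t - t₀), ⟨?_, 1, ![0, t₀], ?_, by simp, by simp [Fin.last], ?_⟩,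
      by simp, ?_⟩
    · fun_prop
    · refine Fin.strictMono_iff_lt_succ.2 fun i => ?_
      fin_cases i; simpa using ht₀
    · intro i
      exact (contDiff_const.add (contDiff_const.mul (contDiff_id.sub contDiff_const))).contDiffOn
    · have hd : ∀ t : ℝ, deriv (fun t => ξ₀ + m * (t - t₀)) t = m := by
        intro t
        have : HasDerivAt (fun t : ℝ => ξ₀ + m * (t - t₀)) m t := by
          simpa using (((hasDerivAt_id t).sub_const t₀).const_mul m).const_add ξ₀
        exact this.deriv
      have hmdiv : m / lam = 2 * ρ - 1 := by field_simp [hm]; rw [hm]; ring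
      have hval : hlKernel (2 * ρ - 1) = ρ ^ 2 := by
        unfold hlKernel
        rw [if_neg (by linarith), if_pos (by linarith)]
        ring
      simp only [hd, hmdiv, hval, intervalIntegral.integral_const, smul_eq_mul]
      ring
  constructor
  · -- lower bound
    rintro y ⟨w, ⟨hcont, k, s, hmono, hs0, hsl, hC1⟩, hwt, rfl⟩
    set F : ℝ → ℝ := fun s => lam * hlKernel (deriv w s / lam) with hF
    set a : ℕ → ℝ := fun i => s ⟨min i k, Nat.lt_succ_of_le (min_le_right i k)⟩ with ha
    have ha0 : a 0 = 0 := by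
      have : (⟨min 0 k, Nat.lt_succ_of_le (min_le_right 0 k)⟩ : Fin (k+1)) = 0 := by
        simp [Fin.ext_iff]
      rw [ha]; simp only [this]; exact hs0
    have hak : a k = t₀ := by
      have : (⟨min k k, Nat.lt_succ_of_le (min_le_right k k)⟩ : Fin (k+1)) = Fin.last k := by
        simp [Fin.ext_iff]
      rw [ha]; simp only [this]; exact hsl
    have hpiece : ∀ i : ℕ, i < k → a i < a (i + 1) ∧
        ContDiffOn ℝ 1 w (Icc (a i) (a (i + 1))) := by
      intro i hi
      have e1 : (⟨min i k, Nat.lt_succ_of_le (min_le_right i k)⟩ : Fin (k+1)) =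
          (⟨i, hi⟩ : Fin k).castSucc := by simp [Fin.ext_iff, Nat.min_eq_left hi.le]
      have e2 : (⟨min (i+1) k, Nat.lt_succ_of_le (min_le_right (i+1) k)⟩ : Fin (k+1)) =
          (⟨i, hi⟩ : Fin k).succ := by simp [Fin.ext_iff, Nat.min_eq_left hi]
      constructor
      · rw [ha]; simp only [e1, e2]; exact hmono Fin.castSucc_lt_succ
      · rw [ha]; simp only [e1, e2]; exact hC1 _
    have hint : ∀ i : ℕ, i < k → IntervalIntegrable F volume (a i) (a (i + 1)) := by
      intro i hi
      exact comp_intervalIntegrable (hpiece i hi).1 (hpiece i hi).2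
        (fun x => lam * hlKernel (x / lam))
        (continuous_const.mul (hlKernel_continuous.comp (by fun_prop)))
    have hsum := intervalIntegral.sum_integral_adjacent_intervals (μ := volume) (a := a) hint
    rw [ha0, hak] at hsum
    have htel : ∑ i ∈ Finset.range k,
        ((ρ * w (a (i+1)) + κ * a (i+1)) - (ρ * w (a i) + κ * a i)) =
        (ρ * w t₀ + κ * t₀) - (ρ * w 0 + κ * 0) := by
      rw [Finset.sum_range_sub (f := fun i => ρ * w (a i) + κ * a i), ha0, hak]
    have hle : (ρ * w t₀ + κ * t₀) - (ρ * w 0 + κ * 0) ≤ ∫ s in (0:ℝ)..t₀, F s := by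
      rw [← hsum, ← htel]
      refine Finset.sum_le_sum fun i hi => ?_
      have hi' := Finset.mem_range.1 hi
      have := piece_lower lam ρ hlam h0 h1 (hpiece i hi').1 (hpiece i hi').2
      rw [hκ]; linarith
    rw [hwt] at hle
    have : κ * t₀ + ρ * ξ₀ ≤ (∫ s in (0:ℝ)..t₀, F s) + ρ * w 0 := by linarith
    calc lam * ρ * (1 - ρ) * t₀ + ρ * ξ₀ = κ * t₀ + ρ * ξ₀ := by rw [hκ]
      _ ≤ _ := this
  · intro c hc
    exact hc hmem
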